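/- Let a ≠ 0, b ≠ 0 and let {f,g} be the Poisson bracket on formal power series R[[x1,x2,x3]] given by the bivector Λ = b(x1²+x2²)∂1∧∂2 + x3(2bx1−ax2)∂2∧∂3 + x3(ax1+2bx2)∂3∧∂1. Then the only Casimir functions (formal power series f with {f,g} = 0 for all g) are the constants. -/

import Mathlib

noncomputable section

abbrev F3 := MvPowerSeries (Fin 3) ℝ

/-- The partial derivative `∂i` of a formal power series in `x1, x2, x3`. -/
def pd (i : Fin 3) (f : F3) : F3 :=
  fun s => ((s i : ℝ) + 1) * MvPowerSeries.coeff (R := ℝ) (s + Finsupp.single i 1) f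

open MvPowerSeries in
/-- The Poisson bracket on `ℝ[[x1,x2,x3]]` given by the bivector
`Λ = b(x1²+x2²)∂1∧∂2 + x3(2bx1−ax2)∂2∧∂3 + x3(ax1+2bx2)∂3∧∂1`. -/
def br (a b : ℝ) (f g : F3) : F3 :=
  C (σ := Fin 3) (R := ℝ) b * (X 0 ^ 2 + X 1 ^ 2) * (pd 0 f * pd 1 g - pd 1 f * pd 0 g)
  + X 2 * (C (σ := Fin 3) (R := ℝ) (2*b) * X 0 - C (σ := Fin 3) (R := ℝ) a * X 1)
      * (pd 1 f * pd 2 g - pd 2 f * pd 1 g)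
  + X 2 * (C (σ := Fin 3) (R := ℝ) a * X 0 + C (σ := Fin 3) (R := ℝ) (2*b) * X 1)
      * (pd 2 f * pd 0 g - pd 0 f * pd 2 g)

namespace CasimirAux

open MvPowerSeries Finsupp

lemma coeff_pd (i : Fin 3) (f : F3) (s : Fin 3 →₀ ℕ) :
    coeff (R := ℝ) s (pd i f) = ((s i : ℝ) + 1) * coeff (R := ℝ) (s + single i 1) f := rfl

lemma coeff_X_mul' (i : Fin 3) (g : F3) (s : Fin 3 →₀ ℕ) :
    coeff (R := ℝ) s (X i * g) = if single i 1 ≤ s then coeff (R := ℝ) (s - single i 1) g else 0 := by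
  rw [X_def, coeff_monomial_mul]
  simp

lemma single_le_iff' (i : Fin 3) (s : Fin 3 →₀ ℕ) : single i 1 ≤ s ↔ 1 ≤ s i := by
  rw [Finsupp.single_le_iff]

lemma pd_X_self (i : Fin 3) : pd i (X i) = (1 : F3) := by
  ext s
  rw [coeff_pd]
  classical
  rw [coeff_X, coeff_one]
  by_cases h : s = 0
  · subst h; simp
  · have hne : ¬ (s + single i 1 = single i 1) := by
      intro hh
      have hs0 : s = 0 := by
        have := add_right_cancel (b := single i 1) (a := s) (c := 0) (by simpa using hh)
        exact this
      exact h hs0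
    simp [hne, h]

lemma pd_X_ne (i j : Fin 3) (h : j ≠ i) : pd j (X i) = (0 : F3) := by
  ext s
  rw [coeff_pd]
  classical
  rw [coeff_X]
  have hne : ¬ (s + single j 1 = single i 1) := by
    intro hh
    have := DFunLike.congr_fun hh j
    simp [single_apply, h, h.symm] at this
  simp [hne]

lemma coeff_X_mul_pd_self (i : Fin 3) (f : F3) (s : Fin 3 →₀ ℕ) :
    coeff (R := ℝ) s (X i * pd i f) = (s i : ℝ) * coeff (R := ℝ) s f := by
  rw [coeff_X_mul']
  by_cases h : 1 ≤ s i
  · rw [if_pos ((single_le_iff' i s).mpr h), coeff_pd]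
    have h1 : ((s - single i 1 : Fin 3 →₀ ℕ)) i = s i - 1 := by
      simp [Finsupp.sub_apply, single_apply]
    have h2 : s - single i 1 + single i 1 = s := by
      ext x
      simp only [Finsupp.add_apply, Finsupp.sub_apply, single_apply]
      by_cases hx : i = x
      · subst hx; simp; omega
      · simp [hx]
    rw [h1, h2]
    congr 1
    push_cast [h]
    ring
  · rw [if_neg (fun hc => h ((single_le_iff' i s).mp hc))]
    have h0 : s i = 0 := by omega
    rw [h0]
    simp

lemma coeff_X_mul_pd_ne (i j : Fin 3) (f : F3) (s : Fin 3 →₀ ℕ) (hij : i ≠ j) :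
    coeff (R := ℝ) s (X i * pd j f) =
      if 1 ≤ s i then ((s j : ℝ) + 1) * coeff (R := ℝ) (s - single i 1 + single j 1) f else 0 := by
  rw [coeff_X_mul']
  by_cases h : 1 ≤ s i
  · rw [if_pos ((single_le_iff' i s).mpr h), if_pos h, coeff_pd]
    have h1 : ((s - single i 1 : Fin 3 →₀ ℕ)) j = s j := by
      simp [Finsupp.sub_apply, single_apply, hij]
    rw [h1]
  · rw [if_neg (fun hc => h ((single_le_iff' i s).mp hc)), if_neg h]

def m3 (i j k : ℕ) : Fin 3 →₀ ℕ := single 0 i + single 1 j + single 2 k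

lemma m3_apply0 (i j k : ℕ) : (m3 i j k) 0 = i := by simp [m3, single_apply]
lemma m3_apply1 (i j k : ℕ) : (m3 i j k) 1 = j := by simp [m3, single_apply]
lemma m3_apply2 (i j k : ℕ) : (m3 i j k) 2 = k := by simp [m3, single_apply]

lemma eq_m3 (s : Fin 3 →₀ ℕ) : s = m3 (s 0) (s 1) (s 2) := by
  ext x
  fin_cases x <;> simp [m3, Finsupp.add_apply, single_apply]

lemma m3_shift01 (i j k : ℕ) (hi : 1 ≤ i) :
    m3 i j k - single 0 1 + single 1 1 = m3 (i-1) (j+1) k := by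
  ext x
  fin_cases x <;>
    simp [m3, Finsupp.sub_apply, Finsupp.add_apply, single_apply]

lemma m3_shift10 (i j k : ℕ) (hj : 1 ≤ j) :
    m3 i j k - single 1 1 + single 0 1 = m3 (i+1) (j-1) k := by
  ext x
  fin_cases x <;>
    simp [m3, Finsupp.sub_apply, Finsupp.add_apply, single_apply]

lemma m3_eq_zero_iff (i j k : ℕ) : m3 i j k = 0 ↔ i = 0 ∧ j = 0 ∧ k = 0 := by
  constructor
  · intro h
    refine ⟨?_, ?_, ?_⟩
    · have := congrArg (fun t : Fin 3 →₀ ℕ => t 0) h; simpa [m3_apply0] using this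
    · have := congrArg (fun t : Fin 3 →₀ ℕ => t 1) h; simpa [m3_apply1] using this
    · have := congrArg (fun t : Fin 3 →₀ ℕ => t 2) h; simpa [m3_apply2] using this
  · rintro ⟨rfl, rfl, rfl⟩
    simp [m3]

lemma core (a b : ℝ) (ha : a ≠ 0) (hb : b ≠ 0) (p : ℕ) (hp : 1 ≤ p) (v : ℕ → ℝ)
    (hrec : ∀ k ≤ 2*p, b * ((if 1 ≤ k then (((2*p-k:ℕ):ℝ) + 1) * v (k-1) else 0)
      - (if 1 ≤ 2*p - k then ((k:ℝ)+1) * v (k+1) else 0)) = a * ((p:ℝ) * v k)) :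
    ∀ k ≤ 2*p, v k = 0 := by
  set n := 2*p with hn
  set w : ℕ → ℝ := fun k => ((k.factorial * (n-k).factorial : ℕ) : ℝ) with hw
  have hwpos : ∀ k, 0 < w k := by
    intro k
    have h : 0 < k.factorial * (n-k).factorial := Nat.mul_pos k.factorial_pos (n-k).factorial_pos
    simp only [hw]
    exact_mod_cast h
  have tel : ∑ k ∈ Finset.range (n+1), w k * v k * (if 1 ≤ k then (((n-k:ℕ):ℝ) + 1) * v (k-1) else 0)
      = ∑ k ∈ Finset.range (n+1), w k * v k * (if 1 ≤ n - k then ((k:ℝ)+1) * v (k+1) else 0) := by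
    rw [Finset.sum_range_succ' (fun k => w k * v k * (if 1 ≤ k then (((n-k:ℕ):ℝ) + 1) * v (k-1) else 0)) n]
    rw [Finset.sum_range_succ (fun k => w k * v k * (if 1 ≤ n - k then ((k:ℝ)+1) * v (k+1) else 0)) n]
    rw [if_neg (by omega : ¬ (1:ℕ) ≤ 0), if_neg (by omega : ¬ (1:ℕ) ≤ n - n)]
    rw [mul_zero, mul_zero, add_zero, add_zero]
    apply Finset.sum_congr rfl
    intro i hi
    have hin : i < n := Finset.mem_range.mp hi
    rw [if_pos (by omega : 1 ≤ i + 1), if_pos (by omega : 1 ≤ n - i)]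
    have hfac : (i+1).factorial * (n-(i+1)).factorial * ((n-(i+1)) + 1)
        = i.factorial * (n-i).factorial * (i+1) := by
      have h1 : n - i = (n - (i+1)) + 1 := by omega
      rw [Nat.factorial_succ i, h1, Nat.factorial_succ (n - (i+1))]
      ring
    have hfacR : w (i+1) * (((n-(i+1):ℕ):ℝ) + 1) = w i * ((i:ℝ)+1) := by
      have h2 := congrArg (fun x : ℕ => (x : ℝ)) hfac
      push_cast at h2
      simp only [hw]
      push_cast
      linarith [h2]
    have h3 : i + 1 - 1 = i := by omega
    rw [h3]
    calc w (i+1) * v (i+1) * ((((n-(i+1):ℕ):ℝ) + 1) * v i)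
        = (w (i+1) * (((n-(i+1):ℕ):ℝ) + 1)) * (v (i+1) * v i) := by ring
      _ = (w i * ((i:ℝ)+1)) * (v (i+1) * v i) := by rw [hfacR]
      _ = w i * v i * (((i:ℝ)+1) * v (i+1)) := by ring
  have hsum : a * (p:ℝ) * ∑ k ∈ Finset.range (n+1), w k * (v k)^2 = 0 := by
    have e1 : ∑ k ∈ Finset.range (n+1), w k * v k * (a * ((p:ℝ) * v k))
        = ∑ k ∈ Finset.range (n+1), w k * v k *
          (b * ((if 1 ≤ k then (((n-k:ℕ):ℝ) + 1) * v (k-1) else 0)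
            - (if 1 ≤ n - k then ((k:ℝ)+1) * v (k+1) else 0))) := by
      apply Finset.sum_congr rfl
      intro k hk
      rw [hrec k (by exact Nat.lt_succ_iff.mp (Finset.mem_range.mp hk))]
    have e2 : ∑ k ∈ Finset.range (n+1), w k * v k * (a * ((p:ℝ) * v k))
        = a * (p:ℝ) * ∑ k ∈ Finset.range (n+1), w k * (v k)^2 := by
      rw [Finset.mul_sum]
      apply Finset.sum_congr rfl
      intro k _
      ring
    have e3 : ∑ k ∈ Finset.range (n+1), w k * v k *
          (b * ((if 1 ≤ k then (((n-k:ℕ):ℝ) + 1) * v (k-1) else 0)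
            - (if 1 ≤ n - k then ((k:ℝ)+1) * v (k+1) else 0)))
        = b * (∑ k ∈ Finset.range (n+1), w k * v k * (if 1 ≤ k then (((n-k:ℕ):ℝ) + 1) * v (k-1) else 0)
          - ∑ k ∈ Finset.range (n+1), w k * v k * (if 1 ≤ n - k then ((k:ℝ)+1) * v (k+1) else 0)) := by
      rw [← Finset.sum_sub_distrib, Finset.mul_sum]
      apply Finset.sum_congr rfl
      intro k _
      ring
    rw [← e2, e1, e3, tel]
    simp
  have hS : ∑ k ∈ Finset.range (n+1), w k * (v k)^2 = 0 := by
    have hp' : (p:ℝ) ≠ 0 := Nat.cast_ne_zero.mpr (by omega)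
    have hap : a * (p:ℝ) ≠ 0 := mul_ne_zero ha hp'
    rcases mul_eq_zero.mp hsum with h | h
    · exact absurd h hap
    · exact h
  intro k hk
  have hterm : w k * (v k)^2 = 0 :=
    (Finset.sum_eq_zero_iff_of_nonneg (fun i _ => by positivity)).mp hS k
      (Finset.mem_range.mpr (by omega))
  rcases mul_eq_zero.mp hterm with h | h
  · exact absurd h (ne_of_gt (hwpos k))
  · exact pow_eq_zero_iff (by norm_num) |>.mp h

end CasimirAux

open MvPowerSeries Finsupp CasimirAux in
/-- For `a ≠ 0`, `b ≠ 0`, the only Casimir functions of the quadratic Poisson structure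
`Λ` on formal power series, i.e. the `f ∈ ℝ[[x1,x2,x3]]` with `{f,g} = 0` for all `g`,
are the constants. -/
theorem casimirs_are_constants (a b : ℝ) (ha : a ≠ 0) (hb : b ≠ 0) (f : F3)
    (hf : ∀ g : F3, br a b f g = 0) :
    ∃ c : ℝ, f = MvPowerSeries.C (σ := Fin 3) (R := ℝ) c := by
  have h0 := hf (X 0)
  have h1 := hf (X 1)
  have h2 := hf (X 2)
  unfold br at h0 h1 h2
  rw [pd_X_self, pd_X_ne 0 1 (by decide), pd_X_ne 0 2 (by decide)] at h0
  rw [pd_X_self, pd_X_ne 1 0 (by decide), pd_X_ne 1 2 (by decide)] at h1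
  rw [pd_X_self, pd_X_ne 2 0 (by decide), pd_X_ne 2 1 (by decide)] at h2
  have hX01 : (X 0 ^ 2 + X 1 ^ 2 : F3) ≠ 0 := by
    intro h
    have h' := congrArg (coeff (R := ℝ) (single 0 2)) h
    classical
    rw [map_add, map_zero, coeff_X_pow, coeff_X_pow] at h'
    have e2 : single (0:Fin 3) 2 ≠ single 1 2 := by
      intro hh; have := DFunLike.congr_fun hh 0; simp [single_apply] at this
    simp [e2] at h'
  have hX2 : (X 2 : F3) ≠ 0 := by
    intro h
    have h' := congrArg (coeff (R := ℝ) (single 2 1)) h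
    classical
    rw [map_zero, coeff_X] at h'
    simp at h'
  have hCa : (C (σ := Fin 3) (R := ℝ) a) ≠ 0 := by
    intro h
    have h' := congrArg (coeff (R := ℝ) 0) h
    rw [map_zero, coeff_zero_C] at h'
    exact ha h'
  have key : (X 0 ^ 2 + X 1 ^ 2 : F3) *
      (C (σ := Fin 3) (R := ℝ) b * (X 0 * pd 1 f - X 1 * pd 0 f) - C (σ := Fin 3) (R := ℝ) a * (X 2 * pd 2 f)) = 0 := by
    have comb : (X 0 ^ 2 + X 1 ^ 2 : F3) *
        (C (σ := Fin 3) (R := ℝ) b * (X 0 * pd 1 f - X 1 * pd 0 f) - C (σ := Fin 3) (R := ℝ) a * (X 2 * pd 2 f))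
        = - (X 1 * (C (σ := Fin 3) (R := ℝ) b * (X 0 ^ 2 + X 1 ^ 2) * (pd 0 f * 1 - pd 1 f * 0)
          + X 2 * (C (σ := Fin 3) (R := ℝ) (2*b) * X 0 - C (σ := Fin 3) (R := ℝ) a * X 1) * (pd 1 f * 0 - pd 2 f * 1)
          + X 2 * (C (σ := Fin 3) (R := ℝ) a * X 0 + C (σ := Fin 3) (R := ℝ) (2*b) * X 1) * (pd 2 f * 0 - pd 0 f * 0)))
          - X 0 * (C (σ := Fin 3) (R := ℝ) b * (X 0 ^ 2 + X 1 ^ 2) * (pd 0 f * 0 - pd 1 f * 1)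
          + X 2 * (C (σ := Fin 3) (R := ℝ) (2*b) * X 0 - C (σ := Fin 3) (R := ℝ) a * X 1) * (pd 1 f * 0 - pd 2 f * 0)
          + X 2 * (C (σ := Fin 3) (R := ℝ) a * X 0 + C (σ := Fin 3) (R := ℝ) (2*b) * X 1) * (pd 2 f * 1 - pd 0 f * 0)) := by
      rw [map_mul]
      ring
    rw [comb, h0, h1]
    ring
  have HB : C (σ := Fin 3) (R := ℝ) b * (X 0 * pd 1 f - X 1 * pd 0 f) = C (σ := Fin 3) (R := ℝ) a * (X 2 * pd 2 f) := by
    rcases mul_eq_zero.mp key with h | h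
    · exact absurd h hX01
    · exact sub_eq_zero.mp h
  have keyA : (X 2 : F3) * (C (σ := Fin 3) (R := ℝ) a * (X 0 * pd 0 f + X 1 * pd 1 f)
      - C (σ := Fin 3) (R := ℝ) 2 * (C (σ := Fin 3) (R := ℝ) a * (X 2 * pd 2 f))) = 0 := by
    have comb2 : (X 2 : F3) * (C (σ := Fin 3) (R := ℝ) a * (X 0 * pd 0 f + X 1 * pd 1 f)
        - C (σ := Fin 3) (R := ℝ) 2 * (C (σ := Fin 3) (R := ℝ) b * (X 0 * pd 1 f - X 1 * pd 0 f)))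
        = - (C (σ := Fin 3) (R := ℝ) b * (X 0 ^ 2 + X 1 ^ 2) * (pd 0 f * 0 - pd 1 f * 0)
          + X 2 * (C (σ := Fin 3) (R := ℝ) (2*b) * X 0 - C (σ := Fin 3) (R := ℝ) a * X 1) * (pd 1 f * 1 - pd 2 f * 0)
          + X 2 * (C (σ := Fin 3) (R := ℝ) a * X 0 + C (σ := Fin 3) (R := ℝ) (2*b) * X 1) * (pd 2 f * 0 - pd 0 f * 1)) := by
      rw [show ((2*b : ℝ)) = ((2:ℝ)*b) from rfl, map_mul]
      ring
    rw [HB] at comb2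
    rw [comb2, h2]
    ring
  have HA : X 0 * pd 0 f + X 1 * pd 1 f = C (σ := Fin 3) (R := ℝ) 2 * (X 2 * pd 2 f) := by
    rcases mul_eq_zero.mp keyA with h | h
    · exact absurd h hX2
    · have h' := sub_eq_zero.mp h
      have h'' : C (σ := Fin 3) (R := ℝ) a * (X 0 * pd 0 f + X 1 * pd 1 f)
          = C (σ := Fin 3) (R := ℝ) a * (C (σ := Fin 3) (R := ℝ) 2 * (X 2 * pd 2 f)) := by rw [h']; ring
      exact mul_left_cancel₀ hCa h''
  -- coefficient forms
  have cHA : ∀ s : Fin 3 →₀ ℕ, (s 0 : ℝ) * coeff (R := ℝ) s f + (s 1 : ℝ) * coeff (R := ℝ) s f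
      = 2 * ((s 2 : ℝ) * coeff (R := ℝ) s f) := by
    intro s
    have := congrArg (coeff (R := ℝ) s) HA
    rwa [map_add, coeff_X_mul_pd_self, coeff_X_mul_pd_self, coeff_C_mul,
      coeff_X_mul_pd_self] at this
  have cHB : ∀ s : Fin 3 →₀ ℕ,
      b * ((if 1 ≤ s 0 then ((s 1 : ℝ) + 1) * coeff (R := ℝ) (s - single 0 1 + single 1 1) f else 0)
        - (if 1 ≤ s 1 then ((s 0 : ℝ) + 1) * coeff (R := ℝ) (s - single 1 1 + single 0 1) f else 0))
      = a * ((s 2 : ℝ) * coeff (R := ℝ) s f) := by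
    intro s
    have := congrArg (coeff (R := ℝ) s) HB
    rwa [coeff_C_mul, map_sub, coeff_X_mul_pd_ne 0 1 f s (by decide),
      coeff_X_mul_pd_ne 1 0 f s (by decide), coeff_C_mul, coeff_X_mul_pd_self] at this
  refine ⟨coeff (R := ℝ) 0 f, ?_⟩
  ext s
  classical
  rw [coeff_C]
  by_cases hs : s = 0
  · rw [if_pos hs, hs]
  · rw [if_neg hs]
    set m := s 0 with hm
    set n := s 1 with hnn
    set p := s 2 with hpp
    by_cases hmn : m + n = 2 * p
    · -- resonant case
      have hp : 1 ≤ p := by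
        by_contra hc
        have hp0 : p = 0 := by omega
        apply hs
        rw [eq_m3 s]
        rw [(m3_eq_zero_iff _ _ _).mpr ⟨by omega, by omega, by omega⟩]
      set v : ℕ → ℝ := fun k => if k ≤ 2*p then coeff (R := ℝ) (m3 k (2*p-k) p) f else 0 with hv
      have vval : ∀ k, k ≤ 2*p → v k = coeff (R := ℝ) (m3 k (2*p-k) p) f := by
        intro k hk
        simp only [hv]
        rw [if_pos hk]
      have hrec : ∀ k ≤ 2*p, b * ((if 1 ≤ k then (((2*p-k:ℕ):ℝ) + 1) * v (k-1) else 0)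
          - (if 1 ≤ 2*p - k then ((k:ℝ)+1) * v (k+1) else 0)) = a * ((p:ℝ) * v k) := by
        intro k hk
        have H := cHB (m3 k (2*p-k) p)
        simp only [m3_apply0, m3_apply1, m3_apply2] at H
        rw [vval k hk]
        have e01 : (if 1 ≤ k then (((2*p-k:ℕ):ℝ)+1) *
              coeff (R := ℝ) (m3 k (2*p-k) p - single 0 1 + single 1 1) f else 0)
            = (if 1 ≤ k then (((2*p-k:ℕ):ℝ)+1) * v (k-1) else 0) := by
          by_cases h1 : 1 ≤ k
          · rw [if_pos h1, if_pos h1, m3_shift01 _ _ _ h1, vval (k-1) (by omega)]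
            have h2 : 2*p - (k-1) = 2*p - k + 1 := by omega
            rw [h2]
          · rw [if_neg h1, if_neg h1]
        have e10 : (if 1 ≤ 2*p - k then ((k:ℝ)+1) *
              coeff (R := ℝ) (m3 k (2*p-k) p - single 1 1 + single 0 1) f else 0)
            = (if 1 ≤ 2*p - k then ((k:ℝ)+1) * v (k+1) else 0) := by
          by_cases h1 : 1 ≤ 2*p - k
          · rw [if_pos h1, if_pos h1, m3_shift10 _ _ _ h1, vval (k+1) (by omega)]
            have h2 : 2*p - (k+1) = 2*p - k - 1 := by omega
            rw [h2]
          · rw [if_neg h1, if_neg h1]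
        rw [← e01, ← e10]
        exact H
      have hall := core a b ha hb p hp v hrec
      have hm2p : m ≤ 2*p := by omega
      have := hall m hm2p
      rw [vval m hm2p] at this
      have hn2p : 2*p - m = n := by omega
      rw [hn2p] at this
      rw [eq_m3 s, ← hm, ← hnn, ← hpp]
      exact this
    · -- non-resonant case : coefficient vanishes by cHA
      have H := cHA s
      have hz : ((m:ℝ) + (n:ℝ) - 2*(p:ℝ)) * coeff (R := ℝ) s f = 0 := by
        rw [← hm, ← hnn, ← hpp] at H
        linarith [H]
      rcases mul_eq_zero.mp hz with h | h
      · exfalso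
        apply hmn
        have : ((m + n : ℕ) : ℝ) = ((2*p : ℕ) : ℝ) := by push_cast; linarith
        exact_mod_cast this
      · exact h

end
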